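/- For every L ≥ 1 the W-state W(L) on L qubits admits a translation-invariant border bond dimension 2 representation: with M_0(ε) = diag(1, ζ) where ζ = (-1)^{1/L} (an L-th root of -1), and M_1(ε) = diag(ε, 0), one has ∑_{i_1,...,i_L ∈ {0,1}} tr(M_{i_1}(ε)···M_{i_L}(ε)) |i_1,...,i_L⟩ = ε·W(L) + O(ε²). In particular, tr(M_0(ε)^L) = 0 and the only words with nonzero trace of first order in ε are those with exactly one index equal to 1. -/

import Mathlib

lemma prod_diag2 (l : List (ℂ × ℂ)) :
    (l.map fun p => !![p.1, 0; 0, p.2]).prod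
      = !![(l.map Prod.fst).prod, 0; 0, (l.map Prod.snd).prod] := by
  induction l with
  | nil => simp [Matrix.one_fin_two]
  | cons p l ih => simp [ih, Matrix.mul_fin_two]

/-- translation-invariant border bond dimension 2 representation of the
W-state on `L ≥ 1` qubits.  With `M₀(ε) = diag(1, ζ)` where `ζ^L = -1` and
`M₁(ε) = diag(ε, 0)`, the MPS tensor `w ↦ tr(M_{w₁}(ε) ⋯ M_{w_L}(ε))` equals
`ε · W(L) + O(ε²)` coefficientwise, where `W(L)` has coefficient `1` exactly on the words
with a single `1`.  In particular `tr(M₀(ε)^L) = 0`. -/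
theorem stmt5 (L : ℕ) (hL : 1 ≤ L) (ζ : ℂ) (hζ : ζ ^ L = -1) :
    (∃ R : (Fin L → Fin 2) → Polynomial ℂ,
      ∀ (ε : ℂ) (w : Fin L → Fin 2),
        (List.ofFn fun i : Fin L =>
            if w i = 0 then !![(1 : ℂ), 0; 0, ζ] else !![ε, 0; 0, 0]).prod.trace
          = ε * (if (∑ i, ((w i : ℕ))) = 1 then 1 else 0) + ε ^ 2 * (R w).eval ε) ∧
    (!![(1 : ℂ), 0; 0, ζ] ^ L).trace = 0 := by
  constructor
  · refine ⟨fun w => if 2 ≤ ∑ i, ((w i : ℕ)) then Polynomial.X ^ (∑ i, ((w i : ℕ)) - 2)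
      else 0, ?_⟩
    intro ε w
    have h1 : (List.ofFn fun i : Fin L =>
        if w i = 0 then !![(1 : ℂ), 0; 0, ζ] else !![ε, 0; 0, 0])
      = (List.ofFn fun i : Fin L =>
          ((if w i = 0 then (1:ℂ) else ε), (if w i = 0 then ζ else 0))).map
        (fun p => !![p.1, 0; 0, p.2]) := by
      rw [List.map_ofFn]
      congr 1
      funext i
      by_cases h : w i = 0 <;> simp [h]
    rw [h1, prod_diag2]
    rw [List.map_ofFn, List.map_ofFn, List.prod_ofFn, List.prod_ofFn]
    rw [Matrix.trace_fin_two_of]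
    simp only [Function.comp]
    have hval : ∀ i, w i ≠ 0 → ((w i : ℕ)) = 1 := by
      intro i h
      have h2 := (w i).isLt
      have h3 : ((w i : ℕ)) ≠ 0 := by
        exact fun h' => h (Fin.ext h')
      omega
    have hA : (∏ i, (if w i = 0 then (1:ℂ) else ε)) = ε ^ ∑ i, ((w i : ℕ)) := by
      rw [← Finset.prod_pow_eq_pow_sum]
      refine Finset.prod_congr rfl fun i _ => ?_
      by_cases h : w i = 0
      · simp [h]
      · simp [h, hval i h]
    rw [hA]
    by_cases hw : ∀ i, w i = 0
    · have hk : (∑ i, ((w i : ℕ))) = 0 := by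
        apply Finset.sum_eq_zero
        intro i _
        simp [hw i]
      have hB : (∏ i, (if w i = 0 then ζ else 0)) = -1 := by
        have : (∏ i, (if w i = 0 then ζ else 0)) = ∏ _i : Fin L, ζ := by
          refine Finset.prod_congr rfl fun i _ => by simp [hw i]
        rw [this, Finset.prod_const, Finset.card_univ, Fintype.card_fin, hζ]
      rw [hB, hk]
      norm_num
    · push_neg at hw
      obtain ⟨i, hi⟩ := hw
      have hB : (∏ j, (if w j = 0 then ζ else 0)) = 0 := by
        apply Finset.prod_eq_zero (Finset.mem_univ i)
        simp [hi]
      have hk : 1 ≤ ∑ j, ((w j : ℕ)) := by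
        calc 1 = ((w i : ℕ)) := (hval i hi).symm
        _ ≤ _ := Finset.single_le_sum (f := fun j => ((w j : ℕ)))
            (fun _ _ => Nat.zero_le _) (Finset.mem_univ i)
      rw [hB]
      set k := ∑ j, ((w j : ℕ)) with hkdef
      rcases Nat.lt_or_ge k 2 with h2 | h2
      · have : k = 1 := by omega
        simp [this]
      · have hne : k ≠ 1 := by omega
        simp only [hne, h2, if_true, if_false, ite_true, ite_false,
          Polynomial.eval_pow, Polynomial.eval_X]
        rw [add_zero, mul_zero, zero_add, ← pow_add]
        congr 1
        omega
  · have hd : !![(1:ℂ), 0; 0, ζ] = Matrix.diagonal ![1, ζ] := by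
      ext i j
      fin_cases i <;> fin_cases j <;> simp [Matrix.diagonal]
    rw [hd, Matrix.diagonal_pow, Matrix.trace_diagonal]
    simp [Fin.sum_univ_two, hζ]
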